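/- Let a₊, a₋, β₁, β₂, β₃ ∈ ℝ with a₊ ≠ 0 and a₋ + 4β₃ ≠ 0. Set γ₁ = 2a₋β₁, γ₂ = −2β₂(a₋ + 4β₃), γ₃ = a₊β₃/(a₋ + 4β₃) − 4, and ȧ₊ = 4a₊a₋, ȧ₋ = 2(a₊ + a₋ − 16)a₋, β̇₁ = −a₋β₁, β̇₂ = −(a₋ + 4β₃)β₂, β̇₃ = 4β₃² + 2a₋β₃ + 4a₋. Define the complex polynomials a = X⁴ + ¼(a₊ − a₋)X³ + ½(a₊ + a₋ − 4)X² + ¼(a₊ − a₋)X + 1, b₁ = β₁(X − 1)²(X + 1), b₂ = i·β₂(X − 1)(X² + (β₃ + 2)X + 1), ȧ = ¼(ȧ₊ − ȧ₋)X³ + ½(ȧ₊ + ȧ₋)X² + ¼(ȧ₊ − ȧ₋)X, ḃ₁ = β̇₁(X − 1)²(X + 1), ḃ₂ = i·β̇₂(X − 1)(X² + (β₃ + 2)X + 1) + i·β₂β̇₃(X − 1)X, c₁ = i·γ₁(X − 1)³, c₂ = γ₂(X + 1)(X² + (γ₃ + 2)X + 1), and Q = −(4β₁γ₂(γ₃ +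 4)/a₊)·(X − 1)². Then the polynomial identities 2a·ḃ_l − ȧ·b_l = 2i·X·a·c_l' − i·c_l·(a + X·a') hold for l = 1, 2, and b₂·c₁ − b₁·c₂ = Q·a. -/

import Mathlib

open Polynomial

set_option maxHeartbeats 4000000 in
/-- The Whitham deformation equations in polynomial form for the Wente family:
with the stated definitions of `γ`'s, time derivatives, and polynomials, the
identities `2a·ḃ_l − ȧ·b_l = 2i·X·a·c_l' − i·c_l·(a + X·a')` (for `l = 1,2`)
and `b₂·c₁ − b₁·c₂ = Q·a` hold. -/
theorem stmt_4 (ap am β₁ β₂ β₃ γ₁ γ₂ γ₃ dap dam dβ₁ dβ₂ dβ₃ : ℝ)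
    (hap : ap ≠ 0) (hden : am + 4 * β₃ ≠ 0)
    (hγ₁ : γ₁ = 2 * am * β₁)
    (hγ₂ : γ₂ = -2 * β₂ * (am + 4 * β₃))
    (hγ₃ : γ₃ = ap * β₃ / (am + 4 * β₃) - 4)
    (hdap : dap = 4 * ap * am)
    (hdam : dam = 2 * (ap + am - 16) * am)
    (hdβ₁ : dβ₁ = -am * β₁)
    (hdβ₂ : dβ₂ = -(am + 4 * β₃) * β₂)
    (hdβ₃ : dβ₃ = 4 * β₃ ^ 2 + 2 * am * β₃ + 4 * am)
    (a b₁ b₂ da db₁ db₂ c₁ c₂ Q : ℂ[X])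
    (ha : a = X ^ 4 + C ((1 / 4 * (ap - am) : ℝ) : ℂ) * X ^ 3
        + C ((1 / 2 * (ap + am - 4) : ℝ) : ℂ) * X ^ 2
        + C ((1 / 4 * (ap - am) : ℝ) : ℂ) * X + 1)
    (hb₁ : b₁ = C ((β₁ : ℝ) : ℂ) * (X - 1) ^ 2 * (X + 1))
    (hb₂ : b₂ = C Complex.I * C ((β₂ : ℝ) : ℂ) * (X - 1) *
        (X ^ 2 + C ((β₃ + 2 : ℝ) : ℂ) * X + 1))
    (hda : da = C ((1 / 4 * (dap - dam) : ℝ) : ℂ) * X ^ 3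
        + C ((1 / 2 * (dap + dam) : ℝ) : ℂ) * X ^ 2
        + C ((1 / 4 * (dap - dam) : ℝ) : ℂ) * X)
    (hdb₁ : db₁ = C ((dβ₁ : ℝ) : ℂ) * (X - 1) ^ 2 * (X + 1))
    (hdb₂ : db₂ = C Complex.I * C ((dβ₂ : ℝ) : ℂ) * (X - 1) *
          (X ^ 2 + C ((β₃ + 2 : ℝ) : ℂ) * X + 1)
        + C Complex.I * C ((β₂ * dβ₃ : ℝ) : ℂ) * (X - 1) * X)
    (hc₁ : c₁ = C Complex.I * C ((γ₁ : ℝ) : ℂ) * (X - 1) ^ 3)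
    (hc₂ : c₂ = C ((γ₂ : ℝ) : ℂ) * (X + 1) * (X ^ 2 + C ((γ₃ + 2 : ℝ) : ℂ) * X + 1))
    (hQ : Q = C ((-(4 * β₁ * γ₂ * (γ₃ + 4)) / ap : ℝ) : ℂ) * (X - 1) ^ 2) :
    (2 * a * db₁ - da * b₁ =
      2 * C Complex.I * X * a * derivative c₁
        - C Complex.I * c₁ * (a + X * derivative a)) ∧
    (2 * a * db₂ - da * b₂ =
      2 * C Complex.I * X * a * derivative c₂
        - C Complex.I * c₂ * (a + X * derivative a)) ∧
    b₂ * c₁ - b₁ * c₂ = Q * a := by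
  subst hγ₁ hγ₂ hγ₃ hdap hdam hdβ₁ hdβ₂ hdβ₃ ha hb₁ hb₂ hda hdb₁ hdb₂ hc₁ hc₂ hQ
  have hapC : ((ap : ℂ)) ≠ 0 := by exact_mod_cast hap
  have hdenC : ((am : ℂ) + 4 * (β₃ : ℂ)) ≠ 0 := by exact_mod_cast hden
  refine ⟨?_, ?_, ?_⟩ <;>
  · apply Polynomial.funext
    intro x
    simp only [derivative_mul, derivative_pow, derivative_add, derivative_sub,
      derivative_X, derivative_one, derivative_C, eval_mul, eval_add, eval_sub,
      eval_pow, eval_X, eval_C, eval_one, eval_ofNat, map_mul,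
      map_add, map_sub, map_pow, map_one, map_ofNat, eval_natCast, eval_zero]
    push_cast
    have h4 : (↑am + ↑β₃ * 4 : ℂ) ≠ 0 := by rw [mul_comm]; exact hdenC
    field_simp
    ring_nf
    try simp only [Complex.I_sq]
    try ring
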